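/- arXiv:2205.01442 — 3 statements merged into one kernel-verified Lean document; each statement's English description precedes it below -/
import Mathlib

section
/- Suppose φ : ℝ^d → ℝ is supermodular on the box [f^L,f^U] and the maps u, a satisfy the bounding system below on X. Then for every direction vector ω and every x ∈ X, φ(f_1(x),…,f_d(x)) ≤ B^ω(φ)(u(x), a(x)). -/
open Finset

noncomputable section

/-- A direction vector: each value `i ∈ {1,…,d}` occurs exactly `n` times. -/
def IsDirVec (d n : ℕ) (ω : Fin (d * n) → Fin d) : Prop :=
  ∀ i : Fin d, (Finset.univ.filter (fun t => ω t = i)).card = n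

/-- The grid point reached after the first `t` moves of the staircase determined by `ω`:
its `i`-th coordinate is the number of moves among the first `t` in direction `i`. -/
def gridPt (d n : ℕ) (ω : Fin (d * n) → Fin d) (t : ℕ) (i : Fin d) : ℕ :=
  (Finset.univ.filter (fun t' : Fin (d * n) => (t' : ℕ) < t ∧ ω t' = i)).card

/-- The staircase over-estimator `B^ω(φ)(u,a)`. -/
def Bstep (d n : ℕ) (φ : (Fin d → ℝ) → ℝ) (ω : Fin (d * n) → Fin d)
    (u a : Fin d → ℕ → ℝ) : ℝ :=
  φ (fun i => a i 0) +
    ∑ t : Fin (d * n),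
      (φ (fun i => if i = ω t then u i (gridPt d n ω ((t : ℕ) + 1) i)
            else a i (gridPt d n ω ((t : ℕ) + 1) i)) -
        φ (fun i => if i = ω t then u i (gridPt d n ω (t : ℕ) i)
            else a i (gridPt d n ω (t : ℕ) i)))

lemma gridPt_zero (d n : ℕ) (ω : Fin (d * n) → Fin d) (i : Fin d) :
    gridPt d n ω 0 i = 0 := by
  simp [gridPt]

lemma gridPt_succ (d n : ℕ) (ω : Fin (d * n) → Fin d) (t : ℕ) (ht : t < d * n) (i : Fin d) :
    gridPt d n ω (t + 1) i =
      if ω ⟨t, ht⟩ = i then gridPt d n ω t i + 1 else gridPt d n ω t i := by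
  unfold gridPt
  by_cases h : ω ⟨t, ht⟩ = i
  · rw [if_pos h]
    have hset : (univ.filter fun t' : Fin (d * n) => (t' : ℕ) < t + 1 ∧ ω t' = i)
        = insert ⟨t, ht⟩ (univ.filter fun t' : Fin (d * n) => (t' : ℕ) < t ∧ ω t' = i) := by
      ext s
      simp only [mem_insert, mem_filter, mem_univ, true_and]
      constructor
      · rintro ⟨hs, he⟩
        rcases Nat.lt_succ_iff_lt_or_eq.mp hs with h' | h'
        · exact Or.inr ⟨h', he⟩
        · exact Or.inl (Fin.ext h')
      · rintro (rfl | ⟨h1, h2⟩)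
        · exact ⟨Nat.lt_succ_self _, h⟩
        · exact ⟨Nat.lt_succ_of_lt h1, h2⟩
    rw [hset, card_insert_of_notMem (by simp)]
  · rw [if_neg h]
    congr 1
    ext s
    simp only [mem_filter, mem_univ, true_and, and_congr_left_iff]
    intro he
    constructor
    · intro hs
      rcases Nat.lt_succ_iff_lt_or_eq.mp hs with h' | h'
      · exact h'
      · exact absurd ((Fin.ext h' : s = ⟨t, ht⟩) ▸ he) h
    · exact fun hs => Nat.lt_succ_of_lt hs

lemma gridPt_le (d n : ℕ) (ω : Fin (d * n) → Fin d) (hω : IsDirVec d n ω) (t : ℕ) (i : Fin d) :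
    gridPt d n ω t i ≤ n := by
  unfold gridPt
  refine le_trans (card_le_card ?_) (le_of_eq (hω i))
  intro s hs
  simp only [mem_filter, mem_univ, true_and] at hs ⊢
  exact hs.2

lemma gridPt_lt (d n : ℕ) (ω : Fin (d * n) → Fin d) (hω : IsDirVec d n ω)
    (t : ℕ) (ht : t < d * n) :
    gridPt d n ω t (ω ⟨t, ht⟩) < n := by
  unfold gridPt
  refine lt_of_lt_of_le (card_lt_card ?_) (le_of_eq (hω (ω ⟨t, ht⟩)))
  rw [Finset.ssubset_def]
  constructor
  · intro s hs; simp only [mem_filter, mem_univ, true_and] at hs ⊢; exact hs.2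
  · intro hsub
    have hmem : (⟨t, ht⟩ : Fin (d * n)) ∈ univ.filter (fun t' => ω t' = ω ⟨t, ht⟩) := by simp
    have := hsub hmem
    simp at this

lemma gridPt_top (d n : ℕ) (ω : Fin (d * n) → Fin d) (hω : IsDirVec d n ω) (i : Fin d) :
    gridPt d n ω (d * n) i = n := by
  unfold gridPt
  refine Eq.trans ?_ (hω i)
  congr 1
  ext s
  simp [s.isLt]

/-- The mixed vector: `u`-value at coordinate `j`, `a`-values elsewhere, at grid point `p^t`. -/
def mixP (d n : ℕ) (ω : Fin (d * n) → Fin d) (A : Fin d → ℕ → ℝ) (t : ℕ) (j : Fin d)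
    (w : Fin d → ℕ → ℝ) : Fin d → ℝ :=
  fun l => if l = j then w l (gridPt d n ω t l) else A l (gridPt d n ω t l)

lemma Bstep_eq_mixP (d n : ℕ) (φ : (Fin d → ℝ) → ℝ) (ω : Fin (d * n) → Fin d)
    (U A : Fin d → ℕ → ℝ) :
    Bstep d n φ ω U A = φ (fun i => A i 0) +
      ∑ t : Fin (d * n),
        (φ (mixP d n ω A ((t : ℕ) + 1) (ω t) U) - φ (mixP d n ω A (t : ℕ) (ω t) U)) := rfl

/-- The core inequality, stated for a single point. -/
lemma aux (d n : ℕ) (fL fU F : Fin d → ℝ) (φ : (Fin d → ℝ) → ℝ)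
    (hsuper : ∀ y z : Fin d → ℝ, (∀ l, fL l ≤ y l ∧ y l ≤ fU l) →
      (∀ l, fL l ≤ z l ∧ z l ≤ fU l) →
      φ y + φ z ≤ φ (fun l => max (y l) (z l)) + φ (fun l => min (y l) (z l)))
    (U A : Fin d → ℕ → ℝ)
    (hFmem : ∀ i, fL i ≤ F i ∧ F i ≤ fU i)
    (haL : ∀ i, fL i ≤ A i 0)
    (haMono : ∀ i, ∀ j, j < n → A i j ≤ A i (j + 1))
    (haU : ∀ i, A i n ≤ fU i)
    (huL : ∀ i, ∀ j, j ≤ n → fL i ≤ U i j)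
    (huf : ∀ i, ∀ j, j ≤ n → U i j ≤ F i)
    (hua : ∀ i, ∀ j, j ≤ n → U i j ≤ A i j)
    (hu0 : ∀ i, U i 0 = A i 0)
    (hun : ∀ i, U i n = F i)
    (ω : Fin (d * n) → Fin d) (hω : IsDirVec d n ω) :
    φ F ≤ Bstep d n φ ω U A := by
  classical
  -- monotonicity of A on [0,n]
  have hAmono : ∀ (i : Fin d) (j k : ℕ), j ≤ k → k ≤ n → A i j ≤ A i k := by
    intro i j k hjk hkn
    induction k with
    | zero => exact le_of_eq (congrArg (A i) (Nat.le_zero.mp hjk))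
    | succ k ih =>
      rcases Nat.eq_or_lt_of_le hjk with h | h
      · exact le_of_eq (congrArg (A i) h)
      · exact (ih (Nat.lt_succ_iff.mp h) (Nat.le_of_succ_le hkn)).trans (haMono i k hkn)
  have hAlb : ∀ (i : Fin d) (k : ℕ), k ≤ n → fL i ≤ A i k :=
    fun i k hk => (haL i).trans (hAmono i 0 k (Nat.zero_le _) hk)
  have hAub : ∀ (i : Fin d) (k : ℕ), k ≤ n → A i k ≤ fU i :=
    fun i k hk => (hAmono i k n hk le_rfl).trans (haU i)
  -- the monotonized under-estimator
  set V : Fin d → ℕ → ℝ := fun i k => min (F i) (A i k) with hVdef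
  have hVmono : ∀ (i : Fin d) (j k : ℕ), j ≤ k → k ≤ n → V i j ≤ V i k :=
    fun i j k h h' => min_le_min le_rfl (hAmono i j k h h')
  have hA0F : ∀ i, A i 0 ≤ F i := fun i => (hu0 i) ▸ huf i 0 (Nat.zero_le _)
  have hV0 : ∀ i, V i 0 = A i 0 := fun i => min_eq_right (hA0F i)
  have hVn : ∀ i, V i n = F i := fun i => min_eq_left ((hun i) ▸ hua i n le_rfl)
  have hUV : ∀ (i : Fin d) (k : ℕ), k ≤ n → U i k ≤ V i k :=
    fun i k hk => le_min (huf i k hk) (hua i k hk)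
  have hVA : ∀ (i : Fin d) (k : ℕ), V i k ≤ A i k := fun i k => min_le_right _ _
  have hVlb : ∀ (i : Fin d) (k : ℕ), k ≤ n → fL i ≤ V i k :=
    fun i k hk => le_min (hFmem i).1 (hAlb i k hk)
  have hVub : ∀ (i : Fin d) (k : ℕ), V i k ≤ fU i :=
    fun i k => (min_le_left _ _).trans (hFmem i).2
  have hUub : ∀ (i : Fin d) (k : ℕ), k ≤ n → U i k ≤ fU i :=
    fun i k hk => (huf i k hk).trans (hFmem i).2
  have hPle : ∀ (t : ℕ) (l : Fin d), gridPt d n ω t l ≤ n := fun t l => gridPt_le d n ω hω t l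
  -- supermodularity workhorse
  have key : ∀ y z y' z' : Fin d → ℝ, (∀ l, fL l ≤ y l ∧ y l ≤ fU l) →
      (∀ l, fL l ≤ z l ∧ z l ≤ fU l) →
      (∀ l, max (y l) (z l) = y' l) → (∀ l, min (y l) (z l) = z' l) →
      φ y + φ z ≤ φ y' + φ z' := by
    intro y z y' z' hy hz h1 h2
    have h := hsuper y z hy hz
    rwa [show (fun l => max (y l) (z l)) = y' from funext h1,
      show (fun l => min (y l) (z l)) = z' from funext h2] at h
  set M := mixP d n ω A with hM
  have hMapp : ∀ (t : ℕ) (j : Fin d) (w : Fin d → ℕ → ℝ) (l : Fin d),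
      M t j w l = if l = j then w l (gridPt d n ω t l) else A l (gridPt d n ω t l) :=
    fun t j w l => rfl
  -- membership of mixed vectors
  have hMmemV : ∀ (t : ℕ) (j : Fin d) (l : Fin d), fL l ≤ M t j V l ∧ M t j V l ≤ fU l := by
    intro t j l
    rw [hMapp]
    by_cases hl : l = j
    · rw [if_pos hl]
      exact ⟨hVlb l _ (hPle t l), hVub l _⟩
    · rw [if_neg hl]
      exact ⟨hAlb l _ (hPle t l), hAub l _ (hPle t l)⟩
  have hMmemU : ∀ (t : ℕ) (j : Fin d) (l : Fin d), fL l ≤ M t j U l ∧ M t j U l ≤ fU l := by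
    intro t j l
    rw [hMapp]
    by_cases hl : l = j
    · rw [if_pos hl]
      exact ⟨huL l _ (hPle t l), hUub l _ (hPle t l)⟩
    · rw [if_neg hl]
      exact ⟨hAlb l _ (hPle t l), hAub l _ (hPle t l)⟩
  -- the step-sum terms and the correction terms
  set Dn : ℕ → ℝ := fun s =>
    if h : s < d * n then φ (M (s + 1) (ω ⟨s, h⟩) U) - φ (M s (ω ⟨s, h⟩) U) else 0 with hDn
  set c : ℕ → Fin d → ℝ := fun t j => φ (M t j V) - φ (M t j U) with hc
  -- main induction
  have main : ∀ t : ℕ, t ≤ d * n →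
      φ (fun j => V j (gridPt d n ω t j)) ≤
        φ (fun j => A j 0) + (∑ s ∈ Finset.range t, Dn s) + ∑ j : Fin d, c t j := by
    intro t
    induction t with
    | zero =>
      intro _
      have e0 : (fun j => V j (gridPt d n ω 0 j)) = fun j => A j 0 := by
        funext j; rw [gridPt_zero, hV0]
      have ec : ∀ j : Fin d, c 0 j = 0 := by
        intro j
        have hMeq : M 0 j V = M 0 j U := by
          funext l
          rw [hMapp, hMapp, gridPt_zero]
          by_cases hl : l = j
          · rw [if_pos hl, if_pos hl, hV0, hu0]
          · rw [if_neg hl, if_neg hl]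
        simp [hc, hMeq]
      rw [e0]
      simp [ec]
    | succ t ih =>
      intro ht1
      have htlt : t < d * n := ht1
      have ihh := ih (le_of_lt htlt)
      set i : Fin d := ω ⟨t, htlt⟩ with hidef
      have hPsucc : ∀ l, gridPt d n ω (t + 1) l =
          if i = l then gridPt d n ω t l + 1 else gridPt d n ω t l :=
        fun l => gridPt_succ d n ω t htlt l
      have hPmono : ∀ l, gridPt d n ω t l ≤ gridPt d n ω (t + 1) l := by
        intro l; rw [hPsucc l]; split <;> omega
      have hki : gridPt d n ω t i < n := gridPt_lt d n ω hω t htlt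
      have hPsi : gridPt d n ω (t + 1) i = gridPt d n ω t i + 1 := by
        rw [hPsucc i, if_pos rfl]
      have hPsne : ∀ l, l ≠ i → gridPt d n ω (t + 1) l = gridPt d n ω t l := by
        intro l hl; rw [hPsucc l, if_neg (Ne.symm hl)]
      -- Step A : supermodular exchange for the V-staircase
      have stepA : φ (fun j => V j (gridPt d n ω (t + 1) j)) + φ (M t i V) ≤
          φ (fun j => V j (gridPt d n ω t j)) + φ (M (t + 1) i V) := by
        have h := key (fun j => V j (gridPt d n ω (t + 1) j)) (M t i V)
          (M (t + 1) i V) (fun j => V j (gridPt d n ω t j))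
          (fun l => ⟨hVlb l _ (hPle _ l), hVub l _⟩) (hMmemV t i)
          ?_ ?_
        · linarith
        · intro l
          show max (V l (gridPt d n ω (t + 1) l)) (M t i V l) = M (t + 1) i V l
          rw [hMapp, hMapp]
          by_cases hl : l = i
          · rw [if_pos hl, if_pos hl, hl, hPsi]
            exact max_eq_left (hVmono i _ _ (Nat.le_succ _) hki)
          · rw [if_neg hl, if_neg hl, hPsne l hl]
            exact max_eq_right (hVA l _)
        · intro l
          show min (V l (gridPt d n ω (t + 1) l)) (M t i V l) = V l (gridPt d n ω t l)
          rw [hMapp]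
          by_cases hl : l = i
          · rw [if_pos hl, hl, hPsi]
            exact min_eq_right (hVmono i _ _ (Nat.le_succ _) hki)
          · rw [if_neg hl, hPsne l hl]
            exact min_eq_left (hVA l _)
      -- Step B : the corrections increase at coordinates j ≠ i
      have stepB : ∀ j : Fin d, j ≠ i → c t j ≤ c (t + 1) j := by
        intro j hj
        have h := key (M t j V) (M (t + 1) j U) (M (t + 1) j V) (M t j U)
          (hMmemV t j) (hMmemU (t + 1) j) ?_ ?_
        · simp only [hc]; linarith
        · intro l
          show max (M t j V l) (M (t + 1) j U l) = M (t + 1) j V l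
          rw [hMapp, hMapp, hMapp]
          by_cases hl : l = j
          · have hlne : l ≠ i := hl ▸ hj
            rw [if_pos hl, if_pos hl, if_pos hl, hPsne l hlne]
            exact max_eq_left (hUV l _ (hPle t l))
          · rw [if_neg hl, if_neg hl, if_neg hl]
            exact max_eq_right (hAmono l _ _ (hPmono l) (hPle _ l))
        · intro l
          show min (M t j V l) (M (t + 1) j U l) = M t j U l
          rw [hMapp, hMapp, hMapp]
          by_cases hl : l = j
          · have hlne : l ≠ i := hl ▸ hj
            rw [if_pos hl, if_pos hl, if_pos hl, hPsne l hlne]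
            exact min_eq_right (hUV l _ (hPle t l))
          · rw [if_neg hl, if_neg hl, if_neg hl]
            exact min_eq_left (hAmono l _ _ (hPmono l) (hPle _ l))
      have hDnt : Dn t = φ (M (t + 1) i U) - φ (M t i U) := by
        simp only [hDn]
        rw [dif_pos htlt]
      -- assemble the sums
      have hsum : (∑ j : Fin d, c t j) + (φ (M (t + 1) i V) - φ (M t i V)) ≤
          Dn t + ∑ j : Fin d, c (t + 1) j := by
        have pointwise : ∀ j : Fin d,
            c t j + (if j = i then (φ (M (t + 1) i V) - φ (M t i V) - Dn t) else 0) ≤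
              c (t + 1) j := by
          intro j
          by_cases hj : j = i
          · subst hj
            rw [if_pos rfl, hDnt]
            apply le_of_eq
            simp only [hc]
            ring
          · rw [if_neg hj]
            simpa using stepB j hj
        have hs := Finset.sum_le_sum (fun j (_ : j ∈ Finset.univ) => pointwise j)
        rw [Finset.sum_add_distrib, Finset.sum_ite_eq' Finset.univ i
          (fun _ => φ (M (t + 1) i V) - φ (M t i V) - Dn t)] at hs
        simp only [Finset.mem_univ, if_pos] at hs
        linarith
      calc φ (fun j => V j (gridPt d n ω (t + 1) j))
          ≤ φ (fun j => V j (gridPt d n ω t j)) + φ (M (t + 1) i V) - φ (M t i V) := by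
            linarith [stepA]
        _ ≤ (φ (fun j => A j 0) + (∑ s ∈ Finset.range t, Dn s) + ∑ j : Fin d, c t j)
              + φ (M (t + 1) i V) - φ (M t i V) := by linarith [ihh]
        _ ≤ φ (fun j => A j 0) + (∑ s ∈ Finset.range (t + 1), Dn s) + ∑ j : Fin d, c (t + 1) j := by
            rw [Finset.sum_range_succ]
            linarith [hsum]
  -- conclude
  have hfin := main (d * n) le_rfl
  have e1 : (fun j => V j (gridPt d n ω (d * n) j)) = F := by
    funext j; rw [gridPt_top d n ω hω j, hVn]
  have e2 : ∀ j : Fin d, c (d * n) j = 0 := by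
    intro j
    have hMeq : M (d * n) j V = M (d * n) j U := by
      funext l
      rw [hMapp, hMapp, gridPt_top d n ω hω l]
      by_cases hl : l = j
      · rw [if_pos hl, if_pos hl, hVn, hun]
      · rw [if_neg hl, if_neg hl]
    simp [hc, hMeq]
  rw [e1] at hfin
  have esum : ∑ τ : Fin (d * n), (φ (M ((τ : ℕ) + 1) (ω τ) U) - φ (M (τ : ℕ) (ω τ) U)) =
      ∑ s ∈ Finset.range (d * n), Dn s := by
    rw [← Fin.sum_univ_eq_sum_range Dn (d * n)]
    apply Finset.sum_congr rfl
    intro τ _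
    simp only [hDn]
    rw [dif_pos τ.isLt]
  rw [Bstep_eq_mixP, ← hM, esum]
  simpa [e2] using hfin

theorem statement_0
    (d n m : ℕ) (hd : 1 ≤ d) (hn : 1 ≤ n)
    (X : Set (Fin m → ℝ)) (fL fU : Fin d → ℝ)
    (f : (Fin m → ℝ) → Fin d → ℝ) (φ : (Fin d → ℝ) → ℝ)
    (hsuper : ∀ y ∈ Set.Icc fL fU, ∀ z ∈ Set.Icc fL fU,
      φ y + φ z ≤ φ (y ⊔ z) + φ (y ⊓ z))
    (u a : (Fin m → ℝ) → Fin d → ℕ → ℝ)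
    (hf : ∀ x ∈ X, f x ∈ Set.Icc fL fU)
    (haL : ∀ x ∈ X, ∀ i, fL i ≤ a x i 0)
    (haMono : ∀ x ∈ X, ∀ i, ∀ j, j < n → a x i j ≤ a x i (j + 1))
    (haU : ∀ x ∈ X, ∀ i, a x i n ≤ fU i)
    (huL : ∀ x ∈ X, ∀ i, ∀ j, j ≤ n → fL i ≤ u x i j)
    (huf : ∀ x ∈ X, ∀ i, ∀ j, j ≤ n → u x i j ≤ f x i)
    (hua : ∀ x ∈ X, ∀ i, ∀ j, j ≤ n → u x i j ≤ a x i j)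
    (hu0 : ∀ x ∈ X, ∀ i, u x i 0 = a x i 0)
    (hun : ∀ x ∈ X, ∀ i, u x i n = f x i)
    (ω : Fin (d * n) → Fin d) (hω : IsDirVec d n ω)
    (x : Fin m → ℝ) (hx : x ∈ X) :
    φ (f x) ≤ Bstep d n φ ω (u x) (a x) := by

  classical
  have hsuper' : ∀ y z : Fin d → ℝ, (∀ l, fL l ≤ y l ∧ y l ≤ fU l) →
      (∀ l, fL l ≤ z l ∧ z l ≤ fU l) →
      φ y + φ z ≤ φ (fun l => max (y l) (z l)) + φ (fun l => min (y l) (z l)) := by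
    intro y z hy hz
    exact hsuper y ⟨fun l => (hy l).1, fun l => (hy l).2⟩
      z ⟨fun l => (hz l).1, fun l => (hz l).2⟩
  exact aux d n fL fU (f x) φ hsuper' (u x) (a x)
    (fun i => ⟨(hf x hx).1 i, (hf x hx).2 i⟩) (haL x hx) (haMono x hx) (haU x hx)
    (huL x hx) (huf x hx) (hua x hx) (hu0 x hx) (hun x hx) ω hω
end
end

section
/- Let φ : ℝ^d → ℝ be supermodular on the box [f^L,f^U] ⊆ ℝ^d and let ω be a permutation of {1,…,d}. For f ∈ [f^L,f^U] define G^ω(f) := φ(f^L) + Σ_{i=1}^d [ φ( Σ_{j=1}^{i−1} e_{ω_j} f^U_{ω_j} + e_{ω_i} f_{ω_i} + Σ_{j=i+1}^{d} e_{ω_j} f^L_{ω_j} ) − φ( Σ_{j=1}^{i−1} e_{ω_j} f^U_{ω_j} + Σ_{j=i}^{d} e_{ω_j} f^L_{ω_j} ) ], where e_i is the i-th standard unit vector. Then φ(f) ≤ G^ω(f) for every f ∈ [f^L,f^U]. If, in addition, φ is concave in each argument when the others are held fixed (i.e., for every i and every g ∈ [f^L,f^U], the map t ↦ φ(g + (t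 − g_i)e_i) is concave on [f^L_i, f^U_i]), then G^ω is a concave function on [f^L,f^U]. -/
noncomputable section

theorem statement_2
    (d : ℕ) (hd : 1 ≤ d)
    (fL fU : Fin d → ℝ) (φ : (Fin d → ℝ) → ℝ)
    (hsuper : ∀ y ∈ Set.Icc fL fU, ∀ z ∈ Set.Icc fL fU,
      φ y + φ z ≤ φ (y ⊔ z) + φ (y ⊓ z))
    (ω : Equiv.Perm (Fin d))
    (G : (Fin d → ℝ) → ℝ)
    (hG : ∀ f : Fin d → ℝ, G f =
      φ fL + ∑ i : Fin d,
        (φ (fun k => if ω.symm k < i then fU k else if ω.symm k = i then f k else fL k) -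
          φ (fun k => if ω.symm k < i then fU k else fL k))) :
    (∀ f ∈ Set.Icc fL fU, φ f ≤ G f) ∧
    ((∀ i : Fin d, ∀ g ∈ Set.Icc fL fU,
        ConcaveOn ℝ (Set.Icc (fL i) (fU i)) (fun t => φ (Function.update g i t))) →
      ConcaveOn ℝ (Set.Icc fL fU) G) := by
  constructor
  · -- Part 1
    intro f hf
    obtain ⟨hLf, hfU⟩ := hf
    have hLU : fL ≤ fU := le_trans hLf hfU
    set P : ℕ → Fin d → ℝ := fun n k => if (ω.symm k : ℕ) < n then f k else fL k with hPdef
    set A : ℕ → Fin d → ℝ := fun n k =>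
      if (ω.symm k : ℕ) < n then fU k else if (ω.symm k : ℕ) = n then f k else fL k with hAdef
    set B : ℕ → Fin d → ℝ := fun n k => if (ω.symm k : ℕ) < n then fU k else fL k with hBdef
    have hPmem : ∀ n, P n ∈ Set.Icc fL fU := fun n =>
      ⟨fun k => by dsimp only [P]; split; exacts [hLf k, le_rfl],
       fun k => by dsimp only [P]; split; exacts [hfU k, hLU k]⟩
    have hBmem : ∀ n, B n ∈ Set.Icc fL fU := fun n =>
      ⟨fun k => by dsimp only [B]; split; exacts [hLU k, le_rfl],
       fun k => by dsimp only [B]; split; exacts [le_rfl, hLU k]⟩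
    have key : ∀ n, φ (P (n+1)) - φ (P n) ≤ φ (A n) - φ (B n) := by
      intro n
      have hsup : P (n+1) ⊔ B n = A n := by
        funext k
        simp only [Pi.sup_apply, P, A, B]
        rcases lt_trichotomy ((ω.symm k : ℕ)) n with h | h | h
        · rw [if_pos (Nat.lt_succ_of_lt h), if_pos h, if_pos h]
          exact sup_eq_right.2 (hfU k)
        · rw [if_pos (by omega : (ω.symm k : ℕ) < n + 1), if_neg (by omega),
            if_neg (by omega), if_pos h]
          exact sup_eq_left.2 (hLf k)
        · rw [if_neg (by omega), if_neg (by omega), if_neg (by omega), if_neg (by omega)]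
          exact sup_idem _
      have hinf : P (n+1) ⊓ B n = P n := by
        funext k
        simp only [Pi.inf_apply, P, B]
        rcases lt_trichotomy ((ω.symm k : ℕ)) n with h | h | h
        · rw [if_pos (Nat.lt_succ_of_lt h), if_pos h, if_pos h]
          exact inf_eq_left.2 (hfU k)
        · rw [if_pos (by omega : (ω.symm k : ℕ) < n + 1), if_neg (by omega), if_neg (by omega)]
          exact inf_eq_right.2 (hLf k)
        · rw [if_neg (by omega), if_neg (by omega), if_neg (by omega)]
          exact inf_idem _
      have h := hsuper (P (n+1)) (hPmem _) (B n) (hBmem _)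
      rw [hsup, hinf] at h
      linarith
    have hPd : P d = f := funext fun k => if_pos (ω.symm k).isLt
    have hP0 : P 0 = fL := funext fun k => if_neg (Nat.not_lt_zero _)
    have htel : ∑ n ∈ Finset.range d, (φ (P (n+1)) - φ (P n)) = φ f - φ fL := by
      rw [Finset.sum_range_sub (fun n => φ (P n)), hPd, hP0]
    have hsum : ∑ n ∈ Finset.range d, (φ (P (n+1)) - φ (P n)) ≤
        ∑ n ∈ Finset.range d, (φ (A n) - φ (B n)) :=
      Finset.sum_le_sum fun n _ => key n
    have hGf : G f = φ fL + ∑ n ∈ Finset.range d, (φ (A n) - φ (B n)) := by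
      rw [hG]
      congr 1
      rw [← Fin.sum_univ_eq_sum_range (fun n => φ (A n) - φ (B n)) d]
      refine Finset.sum_congr rfl fun i _ => ?_
      have h1 : (fun k => if ω.symm k < i then fU k else if ω.symm k = i then f k else fL k)
          = A i.val := by
        funext k
        simp only [A, Fin.lt_def, Fin.ext_iff]
      have h2 : (fun k => if ω.symm k < i then fU k else fL k) = B i.val := by
        funext k
        simp only [B, Fin.lt_def]
      rw [h1, h2]
    rw [htel] at hsum
    rw [hGf]
    linarith
  · -- Part 2
    intro hconc
    refine ⟨convex_Icc _ _, ?_⟩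
    intro x hx y hy a b ha hb hab
    have hLU : fL ≤ fU := le_trans hx.1 hx.2
    have hBmem : ∀ i : Fin d,
        (fun k => if ω.symm k < i then fU k else fL k) ∈ Set.Icc fL fU := fun i =>
      ⟨fun k => by dsimp only; split; exacts [hLU k, le_rfl],
       fun k => by dsimp only; split; exacts [le_rfl, hLU k]⟩
    have hAeq : ∀ (i : Fin d) (f : Fin d → ℝ),
        (fun k => if ω.symm k < i then fU k else if ω.symm k = i then f k else fL k)
          = Function.update (fun k => if ω.symm k < i then fU k else fL k) (ω i) (f (ω i)) := by
      intro i f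
      funext k
      rcases eq_or_ne k (ω i) with hk | hk
      · subst hk
        rw [Function.update_self]
        simp [Equiv.symm_apply_apply]
      · rw [Function.update_of_ne hk]
        have hne : ω.symm k ≠ i := fun h => hk (by rw [← h, Equiv.apply_symm_apply])
        simp only [hne, if_false]
    simp only [hG, smul_eq_mul]
    set tx : Fin d → ℝ := fun i =>
      φ (fun k => if ω.symm k < i then fU k else if ω.symm k = i then x k else fL k) -
        φ (fun k => if ω.symm k < i then fU k else fL k) with htx
    set ty : Fin d → ℝ := fun i =>
      φ (fun k => if ω.symm k < i then fU k else if ω.symm k = i then y k else fL k) -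
        φ (fun k => if ω.symm k < i then fU k else fL k) with hty
    set tm : Fin d → ℝ := fun i =>
      φ (fun k => if ω.symm k < i then fU k else if ω.symm k = i then (a • x + b • y) k else fL k) -
        φ (fun k => if ω.symm k < i then fU k else fL k) with htm
    have hterm : ∀ i ∈ Finset.univ, a * tx i + b * ty i ≤ tm i := by
      intro i _
      have hcon := hconc (ω i) _ (hBmem i)
      have hx' : x (ω i) ∈ Set.Icc (fL (ω i)) (fU (ω i)) := ⟨hx.1 _, hx.2 _⟩
      have hy' : y (ω i) ∈ Set.Icc (fL (ω i)) (fU (ω i)) := ⟨hy.1 _, hy.2 _⟩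
      have h := hcon.2 hx' hy' ha hb hab
      simp only [smul_eq_mul] at h
      have hmix : (a • x + b • y) (ω i) = a * x (ω i) + b * y (ω i) := by
        simp [Pi.add_apply, Pi.smul_apply, smul_eq_mul]
      have hc : a * φ (fun k => if ω.symm k < i then fU k else fL k) +
          b * φ (fun k => if ω.symm k < i then fU k else fL k) =
          φ (fun k => if ω.symm k < i then fU k else fL k) := by
        rw [← add_mul, hab, one_mul]
      simp only [tx, ty, tm]
      rw [hAeq i x, hAeq i y, hAeq i (a • x + b • y), hmix]
      linarith
    have h1 : ∑ i : Fin d, (a * tx i + b * ty i) ≤ ∑ i : Fin d, tm i :=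
      Finset.sum_le_sum hterm
    have h2 : ∑ i : Fin d, (a * tx i + b * ty i) =
        a * ∑ i : Fin d, tx i + b * ∑ i : Fin d, ty i := by
      rw [Finset.sum_add_distrib, ← Finset.mul_sum, ← Finset.mul_sum]
    have h3 : a * φ fL + b * φ fL = φ fL := by rw [← add_mul, hab, one_mul]
    rw [h2] at h1
    ring_nf
    nlinarith [h1, h3]
end
end

section
/- Let φ : [0,1]^d → ℝ be concave-extendable from {0,1}^d and supermodular when restricted to {0,1}^d (i.e., φ(y ∨ z) + φ(y ∧ z) ≥ φ(y) + φ(z) for all y, z ∈ {0,1}^d, with componentwise maximum and minimum). For a permutation ω of {1,…,d} define φ̂^ω(f) := φ(0) + Σ_{i=1}^d ( φ(Σ_{j=1}^{i} e_{ω_j}) − φ(Σ_{j=1}^{i−1} e_{ω_j}) ) f_{ω_i}, where e_i is the i-th standard unit vector. Then for every f ∈ [0,1]^d, conc_{[0,1]^d}(φ)(f) = min_ω φ̂^ω(f), the minimum over all permutations ω of {1,…,d}. -/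
noncomputable section

/-- The concave envelope of `g` over `S`, evaluated at `x`. -/
def concEnv {E : Type*} [AddCommMonoid E] [Module ℝ E] (S : Set E) (g : E → ℝ) (x : E) : ℝ :=
  sSup {r : ℝ | ∃ (k : ℕ) (lam : Fin k → ℝ) (y : Fin k → E),
    (∀ idx, 0 ≤ lam idx) ∧ ∑ idx, lam idx = 1 ∧ (∀ idx, y idx ∈ S) ∧
    ∑ idx, lam idx • y idx = x ∧ r = ∑ idx, lam idx * g (y idx)}

/-- The vertices `{0,1}^d` of the unit hypercube. -/
def corners (d : ℕ) : Set (Fin d → ℝ) := {y | ∀ i, y i = 0 ∨ y i = 1}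

/-- The Lovász-extension value `φ̂^ω(f)` associated with a permutation `ω`. -/
def lovaszVal (d : ℕ) (φ : (Fin d → ℝ) → ℝ) (ω : Equiv.Perm (Fin d)) (f : Fin d → ℝ) : ℝ :=
  φ 0 + ∑ i : Fin d,
    (φ (fun k => if ω.symm k ≤ i then (1 : ℝ) else 0) -
      φ (fun k => if ω.symm k < i then (1 : ℝ) else 0)) * f (ω i)

open Finset

namespace S6

variable {d : ℕ}

/-- The chain corner: indicator of the first `i` elements in order `ω`. -/
def C (ω : Equiv.Perm (Fin d)) (i : ℕ) : Fin d → ℝ :=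
  fun k => if (ω.symm k : ℕ) < i then 1 else 0

lemma C_mem (ω : Equiv.Perm (Fin d)) (i : ℕ) : C ω i ∈ corners d := by
  intro k; unfold C; split <;> simp

lemma C_zero (ω : Equiv.Perm (Fin d)) : C ω 0 = 0 :=
  funext fun k => if_neg (Nat.not_lt_zero _)

lemma corner_nonneg {y : Fin d → ℝ} (hy : y ∈ corners d) (k : Fin d) : 0 ≤ y k := by
  rcases hy k with h | h <;> simp [h]

lemma corner_le_one {y : Fin d → ℝ} (hy : y ∈ corners d) (k : Fin d) : y k ≤ 1 := by
  rcases hy k with h | h <;> simp [h]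

lemma inf_mem_corners {y z : Fin d → ℝ} (hy : y ∈ corners d) (hz : z ∈ corners d) :
    y ⊓ z ∈ corners d := by
  intro k
  rcases hy k with h | h <;> rcases hz k with h' | h' <;>
    simp [Pi.inf_apply, h, h']

/-- `Fv ω f i = f (ω i)` for `i < d`, `0` otherwise. -/
def Fv (ω : Equiv.Perm (Fin d)) (f : Fin d → ℝ) (i : ℕ) : ℝ :=
  if h : i < d then f (ω ⟨i, h⟩) else 0

/-- Rewrite `lovaszVal` as a natural-number range sum. -/
lemma lovasz_eq (φ : (Fin d → ℝ) → ℝ) (ω : Equiv.Perm (Fin d)) (f : Fin d → ℝ) :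
    lovaszVal d φ ω f =
      φ (C ω 0) + ∑ i ∈ range d, (φ (C ω (i + 1)) - φ (C ω i)) * Fv ω f i := by
  unfold lovaszVal
  rw [C_zero]
  congr 1
  rw [← Fin.sum_univ_eq_sum_range (fun i => (φ (C ω (i + 1)) - φ (C ω i)) * Fv ω f i) d]
  refine Finset.sum_congr rfl fun i _ => ?_
  have h1 : (fun k => if ω.symm k ≤ i then (1 : ℝ) else 0) = C ω ((i : ℕ) + 1) := by
    funext k
    simp only [C]
    refine if_congr ?_ rfl rfl
    rw [Fin.le_def, Nat.lt_succ_iff]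
  have h2 : (fun k => if ω.symm k < i then (1 : ℝ) else 0) = C ω (i : ℕ) := by
    funext k
    simp only [C]
    refine if_congr ?_ rfl rfl
    rw [Fin.lt_def]
  have h3 : Fv ω f (i : ℕ) = f (ω i) := by
    simp [Fv, i.isLt]
  rw [h1, h2, h3]

/-- Abel summation. -/
lemma abel_sum (h p : ℕ → ℝ) (n : ℕ) :
    ∑ i ∈ range (n + 1), (h i - h (i + 1)) * p i =
      h 0 * p 0 - h (n + 1) * p n + ∑ i ∈ range n, (p (i + 1) - p i) * h (i + 1) := by
  induction n with
  | zero => simp; ring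
  | succ n ih =>
    rw [sum_range_succ, ih, sum_range_succ]
    ring

/-- Supermodularity: every corner lies below the affine function from the chain `C ω`. -/
lemma corner_bound (φ : (Fin d → ℝ) → ℝ)
    (hsuper : ∀ y ∈ corners d, ∀ z ∈ corners d, φ y + φ z ≤ φ (y ⊔ z) + φ (y ⊓ z))
    (ω : Equiv.Perm (Fin d)) {y : Fin d → ℝ} (hy : y ∈ corners d) :
    φ y ≤ φ (C ω 0) + ∑ i ∈ range d, (φ (C ω (i + 1)) - φ (C ω i)) * Fv ω y i := by
  have key : ∀ n, n ≤ d →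
      φ (y ⊓ C ω n) ≤ φ (C ω 0) + ∑ i ∈ range n, (φ (C ω (i + 1)) - φ (C ω i)) * Fv ω y i := by
    intro n
    induction n with
    | zero =>
      intro _
      have : y ⊓ C ω 0 = C ω 0 := by
        rw [C_zero]
        exact inf_eq_right.2 (fun k => corner_nonneg hy k)
      simp [this]
    | succ n ih =>
      intro hn
      have hnd : n < d := hn
      have step : φ (y ⊓ C ω (n + 1)) ≤
          φ (y ⊓ C ω n) + (φ (C ω (n + 1)) - φ (C ω n)) * Fv ω y n := by
        have hFv : Fv ω y n = y (ω ⟨n, hnd⟩) := by simp [Fv, hnd]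
        rcases hy (ω ⟨n, hnd⟩) with h0 | h1
        · -- y (ω n) = 0 : nothing changes
          have heq : y ⊓ C ω (n + 1) = y ⊓ C ω n := by
            funext k
            simp only [Pi.inf_apply, C]
            rcases lt_trichotomy ((ω.symm k : ℕ)) n with hlt | heqn | hgt
            · rw [if_pos hlt, if_pos (by omega)]
            · have hk : k = ω ⟨n, hnd⟩ := by
                conv_lhs => rw [← ω.apply_symm_apply k]
                congr 1
                exact Fin.ext heqn
              have hy0 : y k = 0 := by rw [hk, h0]
              rw [hy0, if_pos (by omega), if_neg (by omega)]
              simp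
            · rw [if_neg (by omega), if_neg (by omega)]
          rw [heq, hFv, h0]
          simp
        · -- y (ω n) = 1 : supermodularity
          have hmem1 : y ⊓ C ω (n + 1) ∈ corners d := inf_mem_corners hy (C_mem ω _)
          have hs := hsuper (y ⊓ C ω (n + 1)) hmem1 (C ω n) (C_mem ω n)
          have hsup : (y ⊓ C ω (n + 1)) ⊔ C ω n = C ω (n + 1) := by
            funext k
            simp only [Pi.sup_apply, Pi.inf_apply, C]
            rcases lt_trichotomy ((ω.symm k : ℕ)) n with hlt | heqn | hgt
            · rw [if_pos hlt, if_pos (by omega)]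
              have : y k ⊓ 1 ≤ 1 := inf_le_right
              exact sup_eq_right.2 this
            · have hk : k = ω ⟨n, hnd⟩ := by
                conv_lhs => rw [← ω.apply_symm_apply k]
                congr 1
                exact Fin.ext heqn
              have hy1 : y k = 1 := by rw [hk, h1]
              rw [hy1, if_pos (by omega), if_neg (by omega)]
              simp
            · rw [if_neg (by omega), if_neg (by omega)]
              have : y k ⊓ 0 = 0 := inf_eq_right.2 (corner_nonneg hy k)
              rw [this]
              simp
          have hinf : (y ⊓ C ω (n + 1)) ⊓ C ω n = y ⊓ C ω n := by
            have hCle : C ω n ≤ C ω (n + 1) := by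
              intro k
              simp only [C]
              split
              · rw [if_pos (by omega)]
              · split <;> norm_num
            rw [inf_assoc, inf_eq_right.2 hCle]
          rw [hsup, hinf] at hs
          rw [hFv, h1, mul_one]
          linarith
      calc φ (y ⊓ C ω (n + 1)) ≤ φ (y ⊓ C ω n) + (φ (C ω (n + 1)) - φ (C ω n)) * Fv ω y n :=
            step
        _ ≤ _ := by
            rw [sum_range_succ]
            linarith [ih (le_of_lt hnd)]
  have hyd : y ⊓ C ω d = y := by
    funext k
    simp only [Pi.inf_apply, C, if_pos (ω.symm k).isLt]
    exact inf_eq_left.2 (corner_le_one hy k)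
  have := key d le_rfl
  rwa [hyd] at this

/-- Any convex combination of corner values is below every Lovász value. -/
lemma comb_le (φ : (Fin d → ℝ) → ℝ)
    (hsuper : ∀ y ∈ corners d, ∀ z ∈ corners d, φ y + φ z ≤ φ (y ⊔ z) + φ (y ⊓ z))
    (ω : Equiv.Perm (Fin d)) (f : Fin d → ℝ) {r : ℝ}
    (hr : ∃ (k : ℕ) (lam : Fin k → ℝ) (y : Fin k → (Fin d → ℝ)),
      (∀ idx, 0 ≤ lam idx) ∧ ∑ idx, lam idx = 1 ∧ (∀ idx, y idx ∈ corners d) ∧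
      ∑ idx, lam idx • y idx = f ∧ r = ∑ idx, lam idx * φ (y idx)) :
    r ≤ lovaszVal d φ ω f := by
  obtain ⟨k, lam, y, hlam, hsum, hmem, hmean, hrval⟩ := hr
  have hbound : ∀ idx, φ (y idx) ≤
      φ (C ω 0) + ∑ i ∈ range d, (φ (C ω (i + 1)) - φ (C ω i)) * Fv ω (y idx) i :=
    fun idx => corner_bound φ hsuper ω (hmem idx)
  have hFveq : ∀ i, ∑ idx, lam idx * Fv ω (y idx) i = Fv ω f i := by
    intro i
    by_cases hi : i < d
    · have : ∀ idx, Fv ω (y idx) i = y idx (ω ⟨i, hi⟩) := fun idx => by simp [Fv, hi]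
      simp only [this, Fv, hi, dif_pos]
      have := congrFun hmean (ω ⟨i, hi⟩)
      simpa [Finset.sum_apply, Pi.smul_apply, smul_eq_mul] using this
    · simp [Fv, hi]
  calc r = ∑ idx, lam idx * φ (y idx) := hrval
    _ ≤ ∑ idx, lam idx *
        (φ (C ω 0) + ∑ i ∈ range d, (φ (C ω (i + 1)) - φ (C ω i)) * Fv ω (y idx) i) := by
          refine Finset.sum_le_sum fun idx _ => ?_
          exact mul_le_mul_of_nonneg_left (hbound idx) (hlam idx)
    _ = φ (C ω 0) + ∑ i ∈ range d, (φ (C ω (i + 1)) - φ (C ω i)) * Fv ω f i := by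
          simp only [mul_add, Finset.sum_add_distrib, ← Finset.sum_mul, hsum, one_mul]
          congr 1
          simp only [Finset.mul_sum]
          rw [Finset.sum_comm]
          refine Finset.sum_congr rfl fun i _ => ?_
          rw [← hFveq i, Finset.mul_sum]
          refine Finset.sum_congr rfl fun idx _ => by ring
    _ = lovaszVal d φ ω f := (lovasz_eq φ ω f).symm

/-- The sorting representation: some Lovász value is attained by a convex combination. -/
lemma exists_rep (φ : (Fin d → ℝ) → ℝ) (f : Fin d → ℝ)
    (hf : f ∈ Set.Icc (0 : Fin d → ℝ) 1) :
    ∃ ω : Equiv.Perm (Fin d),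
      ∃ (k : ℕ) (lam : Fin k → ℝ) (y : Fin k → (Fin d → ℝ)),
      (∀ idx, 0 ≤ lam idx) ∧ ∑ idx, lam idx = 1 ∧ (∀ idx, y idx ∈ corners d) ∧
      ∑ idx, lam idx • y idx = f ∧ lovaszVal d φ ω f = ∑ idx, lam idx * φ (y idx) := by
  obtain ⟨hf0, hf1⟩ := hf
  set ω : Equiv.Perm (Fin d) := Tuple.sort (-f) with hω
  have hanti : ∀ i j : Fin d, i ≤ j → f (ω j) ≤ f (ω i) := by
    intro i j hij
    have := Tuple.monotone_sort (-f) hij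
    simpa using this
  set h : ℕ → ℝ := fun i => if i = 0 then 1 else Fv ω f (i - 1) with hh
  have h_succ : ∀ i : ℕ, h (i + 1) = Fv ω f i := by
    intro i; simp [hh]
  have h_zero : h 0 = 1 := by simp [hh]
  have h_top : h (d + 1) = 0 := by rw [h_succ]; simp [Fv]
  have hFv_nonneg : ∀ i, 0 ≤ Fv ω f i := by
    intro i; unfold Fv; split
    · exact hf0 _
    · exact le_rfl
  have hmono : ∀ i, i ≤ d → h (i + 1) ≤ h i := by
    intro i hi
    cases i with
    | zero =>
      rw [h_zero, h_succ]
      unfold Fv; split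
      · exact hf1 _
      · norm_num
    | succ m =>
      rw [h_succ, h_succ]
      unfold Fv
      by_cases hm1 : m + 1 < d
      · have hm : m < d := by omega
        rw [dif_pos hm1, dif_pos hm]
        exact hanti ⟨m, hm⟩ ⟨m + 1, hm1⟩ (by simp [Fin.le_def])
      · rw [dif_neg hm1]
        split
        · exact hf0 _
        · exact le_rfl
  refine ⟨ω, d + 1, fun i => h i - h ((i : ℕ) + 1), fun i => C ω (i : ℕ), ?_, ?_, ?_, ?_, ?_⟩
  · intro i
    dsimp only
    have := hmono (i : ℕ) (by omega)
    linarith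
  · rw [Fin.sum_univ_eq_sum_range (fun i => h i - h (i + 1)) (d + 1),
      Finset.sum_range_sub' h (d + 1), h_zero, h_top]
    ring
  · intro i; exact C_mem ω _
  · funext kk
    rw [Finset.sum_apply]
    set m : ℕ := (ω.symm kk : ℕ) with hm
    have hmd : m < d := (ω.symm kk).isLt
    set H : ℕ → ℝ := fun i => h (max i (m + 1)) with hH
    have hterm : ∀ i : Fin (d + 1),
        ((h (i : ℕ) - h ((i : ℕ) + 1)) • C ω (i : ℕ)) kk = H (i : ℕ) - H ((i : ℕ) + 1) := by
      intro i
      simp only [Pi.smul_apply, smul_eq_mul, C, hH]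
      by_cases hmi : m < (i : ℕ)
      · rw [if_pos hmi, max_eq_left (by omega), max_eq_left (by omega)]
        ring
      · rw [if_neg hmi, max_eq_right (by omega), max_eq_right (by omega)]
        ring
    rw [Finset.sum_congr rfl fun i _ => hterm i]
    rw [Fin.sum_univ_eq_sum_range (fun i => H i - H (i + 1)) (d + 1),
      Finset.sum_range_sub' H (d + 1)]
    simp only [hH]
    rw [max_eq_right (by omega : 0 ≤ m + 1), max_eq_left (by omega : m + 1 ≤ d + 1),
      h_top, h_succ]
    have : Fv ω f m = f (ω ⟨m, hmd⟩) := by simp [Fv, hmd]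
    rw [this]
    have : ω ⟨m, hmd⟩ = kk := by
      have : (⟨m, hmd⟩ : Fin d) = ω.symm kk := Fin.ext rfl
      rw [this, ω.apply_symm_apply]
    rw [this]
    ring
  · rw [lovasz_eq φ ω f,
      Fin.sum_univ_eq_sum_range (fun i => (h i - h (i + 1)) * φ (C ω i)) (d + 1),
      abel_sum h (fun i => φ (C ω i)) d, h_zero, h_top]
    simp only [one_mul, zero_mul, sub_zero, h_succ]

end S6

theorem statement_6
    (d : ℕ) (φ : (Fin d → ℝ) → ℝ)
    (hsuper : ∀ y ∈ corners d, ∀ z ∈ corners d, φ y + φ z ≤ φ (y ⊔ z) + φ (y ⊓ z))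
    (hext : ∀ f ∈ Set.Icc (0 : Fin d → ℝ) 1,
      concEnv (Set.Icc (0 : Fin d → ℝ) 1) φ f = concEnv (corners d) φ f) :
    ∀ f ∈ Set.Icc (0 : Fin d → ℝ) 1,
      concEnv (Set.Icc (0 : Fin d → ℝ) 1) φ f =
        sInf {r : ℝ | ∃ ω : Equiv.Perm (Fin d), r = lovaszVal d φ ω f} := by
  intro f hf
  classical
  set Tc : Set ℝ := {r : ℝ | ∃ (k : ℕ) (lam : Fin k → ℝ) (y : Fin k → (Fin d → ℝ)),
    (∀ idx, 0 ≤ lam idx) ∧ ∑ idx, lam idx = 1 ∧ (∀ idx, y idx ∈ corners d) ∧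
    ∑ idx, lam idx • y idx = f ∧ r = ∑ idx, lam idx * φ (y idx)} with hTc
  have hce : concEnv (corners d) φ f = sSup Tc := rfl
  obtain ⟨ω₀, k0, lam0, y0, h1, h2, h3, h4, h5⟩ := S6.exists_rep φ f hf
  have hmem0 : lovaszVal d φ ω₀ f ∈ Tc := ⟨k0, lam0, y0, h1, h2, h3, h4, h5⟩
  have hub : ∀ ω : Equiv.Perm (Fin d), ∀ r ∈ Tc, r ≤ lovaszVal d φ ω f := fun ω r hr =>
    S6.comb_le φ hsuper ω f hr
  have hTne : Tc.Nonempty := ⟨_, hmem0⟩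
  have hTbdd : BddAbove Tc := ⟨lovaszVal d φ ω₀ f, fun r hr => hub ω₀ r hr⟩
  set P : Set ℝ := {r : ℝ | ∃ ω : Equiv.Perm (Fin d), r = lovaszVal d φ ω f} with hP
  have hPne : P.Nonempty := ⟨lovaszVal d φ 1 f, 1, rfl⟩
  have hPbdd : BddBelow P := by
    have : P = Set.range (fun ω : Equiv.Perm (Fin d) => lovaszVal d φ ω f) := by
      ext r
      simp [hP, Set.range, eq_comm]
    rw [this]
    exact (Set.finite_range _).bddBelow
  rw [hext f hf, hce]
  apply le_antisymm
  · refine le_csInf hPne ?_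
    rintro r ⟨ω, rfl⟩
    exact csSup_le hTne (hub ω)
  · exact le_trans (csInf_le hPbdd ⟨ω₀, rfl⟩) (le_csSup hTbdd hmem0)
end
end
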